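/- With ũ = (v, p^D), i.e. ũ − u = (0, p^D − p), one has A_n(u)^-_Θ (ũ − u)·ψ = (p − p^D)χ/√(4θ² + ρ² v_n²) − β(p − p^D)φ_n for all ψ = (φ, χ), where β = λ_m²/(θ² + λ_m²); in particular A_n(u)^-_Θ(ũ−u) = 0 iff p = p^D. -/

import Mathlib

open Matrix

set_option maxHeartbeats 2000000 in
/-- With `ũ = (v, p^D)`, i.e. `ũ − u = (0, p^D − p)`:
`Aₙ(u)⁻_Θ (ũ − u)·ψ = (p − p^D)χ/√(4θ² + ρ² vₙ²) − β(p − p^D)φₙ` with `β = λm²/(θ² + λm²)`;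
in particular `Aₙ(u)⁻_Θ (ũ − u) = 0 ↔ p = p^D`. -/
theorem stmt_16 (ρ θ : ℝ) (hρ : 0 < ρ) (hθ : 0 < θ)
    (n : Fin 2 → ℝ) (hn : n 0 ^ 2 + n 1 ^ 2 = 1)
    (v : Fin 2 → ℝ) (p : ℝ) (vn : ℝ) (hvn : vn = v 0 * n 0 + v 1 * n 1)
    (Th A : Matrix (Fin 3) (Fin 3) ℝ)
    (hTh : Th = Matrix.diagonal ![1, 1, θ])
    (hA : A = !![ρ * vn, 0, n 0; 0, ρ * vn, n 1; n 0, n 1, 0])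
    (R : Matrix (Fin 3) (Fin 3) ℝ) (dv : Fin 3 → ℝ)
    (hR : R * Rᵀ = 1)
    (hdec : Th * A * Th = R * Matrix.diagonal dv * Rᵀ)
    (Mneg : Matrix (Fin 3) (Fin 3) ℝ)
    (hMneg : Mneg = Th⁻¹ * (R * Matrix.diagonal (fun i => min (dv i) 0) * Rᵀ) * Th⁻¹)
    (pD : ℝ)
    (lm β : ℝ)
    (hlm : lm = (ρ * vn - Real.sqrt (4 * θ ^ 2 + ρ ^ 2 * vn ^ 2)) / 2)
    (hβ : β = lm ^ 2 / (θ ^ 2 + lm ^ 2)) :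
    (∀ (φ : Fin 2 → ℝ) (χ : ℝ),
      (Mneg *ᵥ ![0, 0, pD - p]) ⬝ᵥ ![φ 0, φ 1, χ] =
        (p - pD) * χ / Real.sqrt (4 * θ ^ 2 + ρ ^ 2 * vn ^ 2)
          - β * (p - pD) * (φ 0 * n 0 + φ 1 * n 1)) ∧
    (Mneg *ᵥ ![0, 0, pD - p] = 0 ↔ p = pD) := by
  have hθ0 : θ ≠ 0 := ne_of_gt hθ
  set a := ρ * vn with ha
  set s := Real.sqrt (4 * θ ^ 2 + ρ ^ 2 * vn ^ 2) with hs
  have hspos : 0 < s := Real.sqrt_pos.mpr (by positivity)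
  have hs0 : s ≠ 0 := ne_of_gt hspos
  have hs2 : s ^ 2 = 4 * θ ^ 2 + a ^ 2 := by
    rw [hs, Real.sq_sqrt (by positivity)]; ring
  obtain ⟨lp, hlp⟩ : ∃ x : ℝ, x = (a + s) / 2 := ⟨_, rfl⟩
  have hlppos : 0 < lp := by rw [hlp]; nlinarith [hspos, hs2, hθ, sq_nonneg (a + s)]
  have hlp0 : lp ≠ 0 := ne_of_gt hlppos
  have hlmneg : lm < 0 := by rw [hlm]; nlinarith [hspos, hs2, hθ, sq_nonneg (a - s)]
  have hprod : lm * lp = -θ ^ 2 := by rw [hlm, hlp]; linear_combination (-1/4 : ℝ) * hs2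
  have hsum : lm + lp = a := by rw [hlm, hlp]; ring
  have hdiff : lp - lm = s := by rw [hlm, hlp]; ring
  clear_value a s
  have hRR : Rᵀ * R = 1 := mul_eq_one_comm.mp hR
  -- explicit form of S = Θ A Θ
  have hS : Th * A * Th = !![a, 0, θ * n 0; 0, a, θ * n 1; θ * n 0, θ * n 1, 0] := by
    subst hTh hA
    ext i j
    fin_cases i <;> fin_cases j <;>
      simp [Matrix.mul_apply, Fin.sum_univ_three, Matrix.diagonal_apply,
        Matrix.vecHead, Matrix.vecTail] <;> ring
  -- eigenvalues
  have heig : ∀ i, dv i = a ∨ dv i = lp ∨ dv i = lm := by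
    intro i
    have hdet : (R * Matrix.diagonal (fun j => dv j - dv i) * Rᵀ).det = 0 := by
      rw [Matrix.det_mul, Matrix.det_mul, Matrix.det_diagonal,
        Finset.prod_eq_zero (Finset.mem_univ i) (by simp)]
      ring
    have hmm : R * Matrix.diagonal (fun j => dv j - dv i) * Rᵀ
        = Th * A * Th - dv i • 1 := by
      rw [hdec]
      have h1 : Matrix.diagonal (fun j => dv j - dv i)
          = Matrix.diagonal dv - dv i • 1 := by
        ext j k
        by_cases h : j = k
        · subst h; simp
        · simp [Matrix.diagonal_apply_ne _ h, Matrix.one_apply_ne h]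
      rw [h1, Matrix.mul_sub, Matrix.sub_mul]
      congr 1
      rw [Matrix.mul_smul, Matrix.mul_one, Matrix.smul_mul, hR]
    rw [hmm, hS] at hdet
    have hexp : (!![a, 0, θ * n 0; 0, a, θ * n 1; θ * n 0, θ * n 1, 0]
        - dv i • (1 : Matrix (Fin 3) (Fin 3) ℝ))
        = !![a - dv i, 0, θ * n 0; 0, a - dv i, θ * n 1;
            θ * n 0, θ * n 1, -(dv i)] := by
      ext j k
      fin_cases j <;> fin_cases k <;>
        simp [Matrix.one_apply, Fin.ext_iff, Matrix.vecHead, Matrix.vecTail]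
    rw [hexp, Matrix.det_fin_three] at hdet
    norm_num at hdet
    simp at hdet
    have hfac : (a - dv i) * ((dv i - lp) * (dv i - lm)) = 0 := by
      linear_combination hdet + (a - dv i) * θ ^ 2 * hn
        - (a - dv i) * (dv i) * hsum + (a - dv i) * hprod
    rcases mul_eq_zero.mp hfac with h | h
    · left; linarith [sub_eq_zero.mp h]
    · rcases mul_eq_zero.mp h with h' | h'
      · right; left; exact sub_eq_zero.mp h'
      · right; right; exact sub_eq_zero.mp h'
  -- interpolation polynomial coefficients
  obtain ⟨m, hm⟩ : ∃ x : ℝ, x = min a 0 := ⟨_, rfl⟩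
  obtain ⟨q2, hq2⟩ : ∃ x : ℝ, x = -m / θ ^ 2 + lm / (lp * s) := ⟨_, rfl⟩
  obtain ⟨q1, hq1⟩ : ∃ x : ℝ, x = m * a / θ ^ 2 - lm * (a + lp) / (lp * s) := ⟨_, rfl⟩
  obtain ⟨q0, hq0⟩ : ∃ x : ℝ, x = m + a * lm / s := ⟨_, rfl⟩
  have hq : ∀ i, min (dv i) 0 = q0 + q1 * dv i + q2 * dv i ^ 2 := by
    intro i
    rcases heig i with h | h | h <;> rw [h, hq0, hq1, hq2]
    · rw [← hm]; field_simp; ring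
    · rw [min_eq_right hlppos.le]; field_simp
      linear_combination (m*s*lp) * hsum - (m*s) * hprod
    · rw [min_eq_left hlmneg.le]; field_simp
      linear_combination (m*s*lp*lm - lm*θ^2*(lm-lp)) * hsum
        - (m*s*lp) * hprod - (lm*θ^2*lp) * hdiff
  have hDmin : Matrix.diagonal (fun i => min (dv i) 0)
      = q0 • (1 : Matrix (Fin 3) (Fin 3) ℝ) + q1 • Matrix.diagonal dv
        + q2 • (Matrix.diagonal dv * Matrix.diagonal dv) := by
    rw [Matrix.diagonal_mul_diagonal]
    ext i j
    by_cases h : i = j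
    · subst h
      simp only [Matrix.diagonal_apply_eq, Matrix.add_apply, Matrix.smul_apply,
        Matrix.one_apply_eq, smul_eq_mul, mul_one]
      rw [hq i]; ring
    · simp [Matrix.diagonal_apply_ne _ h, Matrix.one_apply_ne h]
  -- squares conjugate
  have hsq : (R * Matrix.diagonal dv * Rᵀ) * (R * Matrix.diagonal dv * Rᵀ)
      = R * (Matrix.diagonal dv * Matrix.diagonal dv) * Rᵀ := by
    calc (R * Matrix.diagonal dv * Rᵀ) * (R * Matrix.diagonal dv * Rᵀ)
        = R * Matrix.diagonal dv * (Rᵀ * R) * (Matrix.diagonal dv * Rᵀ) := by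
          simp only [Matrix.mul_assoc]
      _ = _ := by rw [hRR, Matrix.mul_one]; simp only [Matrix.mul_assoc]
  have hRDR : R * Matrix.diagonal (fun i => min (dv i) 0) * Rᵀ
      = q0 • (1 : Matrix (Fin 3) (Fin 3) ℝ)
        + q1 • (R * Matrix.diagonal dv * Rᵀ)
        + q2 • ((R * Matrix.diagonal dv * Rᵀ) * (R * Matrix.diagonal dv * Rᵀ)) := by
    rw [hDmin, hsq]
    simp only [Matrix.mul_add, Matrix.add_mul, Matrix.mul_smul, Matrix.smul_mul,
      Matrix.mul_one, Matrix.one_mul, Matrix.mul_assoc, hR]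
  -- explicit matrix N with Θ N Θ = q0 + q1 S + q2 S²
  obtain ⟨N, hNdef⟩ : ∃ X : Matrix (Fin 3) (Fin 3) ℝ,
      X = !![q0 + q1*a + q2*(a^2 + θ^2*(n 0)^2), q2*θ^2*(n 0)*(n 1), (q1 + a*q2)*(n 0);
             q2*θ^2*(n 0)*(n 1), q0 + q1*a + q2*(a^2 + θ^2*(n 1)^2), (q1 + a*q2)*(n 1);
             (q1 + a*q2)*(n 0), (q1 + a*q2)*(n 1), (q0 + q2*θ^2)/θ^2] := ⟨_, rfl⟩
  have hThN : Th * N * Th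
      = q0 • (1 : Matrix (Fin 3) (Fin 3) ℝ) + q1 • (Th * A * Th)
        + q2 • ((Th * A * Th) * (Th * A * Th)) := by
    have hd3 : (Matrix.diagonal ![1,1,θ] : Matrix (Fin 3) (Fin 3) ℝ)
        = !![1,0,0;0,1,0;0,0,θ] := by
      ext i j; fin_cases i <;> fin_cases j <;>
        simp [Matrix.diagonal_apply, Fin.ext_iff, Matrix.vecHead, Matrix.vecTail]
    rw [hS, hNdef, hTh, hd3, Matrix.mul_fin_three, Matrix.mul_fin_three,
      Matrix.mul_fin_three, Matrix.one_fin_three]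
    have h1 : θ⁻¹ ^ 2 * θ ^ 2 = 1 := by field_simp
    ext i j
    fin_cases i <;> fin_cases j <;>
      simp [Matrix.add_apply, Matrix.smul_apply, smul_eq_mul,
        -mul_eq_mul_left_iff, -mul_eq_mul_right_iff] <;>
      first
        | ring1
        | linear_combination (q0 + θ^2*q2) * h1 - θ^2*q2*hn
  have hRDRN : R * Matrix.diagonal (fun i => min (dv i) 0) * Rᵀ = Th * N * Th := by
    rw [hRDR, hThN, hdec]
  have hdetTh : IsUnit Th.det := by
    have hdt : Th.det = θ := by
      rw [hTh, Matrix.det_diagonal, Fin.prod_univ_three]; norm_num; simp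
    rw [hdt]; exact isUnit_iff_ne_zero.mpr hθ0
  have hMeq : Mneg = N := by
    rw [hMneg, hRDRN]
    simp only [Matrix.mul_assoc, Matrix.mul_nonsing_inv _ hdetTh, Matrix.mul_one]
    rw [← Matrix.mul_assoc, Matrix.nonsing_inv_mul _ hdetTh, Matrix.one_mul]
  -- scalar coefficients
  have hden : θ ^ 2 + lm ^ 2 ≠ 0 := by positivity
  have hlm0 : lm ≠ 0 := ne_of_lt hlmneg
  have hc1 : q1 + a * q2 = β := by
    rw [hq1, hq2, hβ]
    field_simp
    linear_combination (-θ^2*lp*lm) * hprod + (θ^2*lp*lm^2) * hdiff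
  have hc3 : (q0 + q2 * θ^2) / θ^2 = -1/s := by
    rw [hq0, hq2]
    field_simp
    linear_combination a * hprod + θ^2 * hsum
  have hvec : Mneg *ᵥ ![0, 0, pD - p]
      = ![(pD - p) * β * n 0, (pD - p) * β * n 1, -(pD - p)/s] := by
    rw [hMeq, hNdef]
    funext k
    fin_cases k <;>
      simp [Matrix.mulVec, dotProduct, Fin.sum_univ_three] <;>
      first
        | linear_combination (pD - p) * (n 0) * hc1
        | linear_combination (pD - p) * (n 1) * hc1
        | linear_combination (pD - p) * hc3
  constructor
  · intro φ χ
    rw [hvec]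
    simp [dotProduct, Fin.sum_univ_three]
    field_simp
    ring
  · rw [hvec]
    constructor
    · intro h
      have h3 := congrFun h 2
      simp at h3
      rcases h3 with h3 | h3
      · linarith [sub_eq_zero.mp (by linarith : pD - p = 0)]
      · exact absurd h3 hs0
    · intro h
      funext k
      fin_cases k <;> simp [h]
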